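/- Fix integers s, t and a positive integer r with gcd(r,t) = 1. Then there exists a positive integer m such that r divides f_m(s,t). -/

import Mathlib

/-- Generalized Fibonacci sequence: f 0 = 0, f 1 = 1, f (n+2) = s * f (n+1) + t * f n. -/
def genFib (s t : ℤ) : ℕ → ℤ
  | 0 => 0
  | 1 => 1
  | n + 2 => s * genFib s t (n + 1) + t * genFib s t n

/-- If gcd(r, t) = 1 then some positive index term is divisible by r. -/
theorem exists_rank (s t : ℤ) (r : ℕ) (hr : 0 < r) (hcop : IsCoprime (r : ℤ) t) :
    ∃ m : ℕ, 0 < m ∧ (r : ℤ) ∣ genFib s t m := by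
  haveI : NeZero r := ⟨hr.ne'⟩
  -- t is a unit in ZMod r
  obtain ⟨a, b, hab⟩ := hcop
  have ht : IsUnit ((t : ℤ) : ZMod r) := by
    refine IsUnit.of_mul_eq_one ((b : ℤ) : ZMod r) ?_
    have h1 : (((a * r + b * t : ℤ)) : ZMod r) = ((1 : ℤ) : ZMod r) := by rw [hab]
    push_cast at h1
    rw [ZMod.natCast_self] at h1
    linear_combination h1
  -- the state map
  set F : ZMod r × ZMod r → ZMod r × ZMod r :=
    fun p => (p.2, (s : ZMod r) * p.2 + (t : ZMod r) * p.1) with hF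
  have hFinj : Function.Injective F := by
    rintro ⟨x1, y1⟩ ⟨x2, y2⟩ h
    simp only [hF, Prod.mk.injEq] at h
    obtain ⟨h1, h2⟩ := h
    subst h1
    have : (t : ZMod r) * x1 = (t : ZMod r) * x2 := by linear_combination h2
    exact Prod.ext (ht.mul_left_cancel this) rfl
  set g : ℕ → ZMod r × ZMod r :=
    fun n => ((genFib s t n : ZMod r), (genFib s t (n + 1) : ZMod r)) with hg
  have hstep : ∀ n, g (n + 1) = F (g n) := by
    intro n
    simp only [hg, hF, Prod.mk.injEq]
    refine ⟨trivial, ?_⟩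
    show ((genFib s t (n + 2) : ℤ) : ZMod r) = _
    rw [genFib]
    push_cast
    ring
  have hiter : ∀ n, g n = F^[n] (g 0) := by
    intro n
    induction n with
    | zero => rfl
    | succ k ih => rw [hstep, ih, Function.iterate_succ_apply']
  -- pigeonhole
  obtain ⟨i, j, hij, heq⟩ := Finite.exists_ne_map_eq_of_infinite g
  wlog hlt : i < j generalizing i j
  · exact this j i hij.symm heq.symm (hij.lt_or_gt.resolve_left hlt)
  have hinj : Function.Injective (F^[i]) := Function.Injective.iterate hFinj i
  have : g 0 = g (j - i) := by
    apply hinj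
    rw [← hiter i, hiter (j - i), ← Function.iterate_add_apply,
      Nat.add_sub_cancel' hlt.le, ← hiter]
    exact heq
  refine ⟨j - i, Nat.sub_pos_of_lt hlt, ?_⟩
  have h0 : ((genFib s t (j - i) : ℤ) : ZMod r) = 0 := by
    have := congrArg Prod.fst this
    simp only [hg] at this
    rw [← this]
    simp [genFib]
  exact (ZMod.intCast_zmod_eq_zero_iff_dvd _ _).mp h0
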